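/- arXiv:1202.6246 — 2 statements merged into one kernel-verified Lean document; each statement's English description precedes it below -/
import Mathlib

section
/- The singular modulus for r = 5 is k₅ = √((9 + 4√5 − 2√(38 + 17√5))/(18 + 8√5)); that is, this value of k ∈ (0,1) satisfies K(√(1−k²))/K(k) = √5. -/
open Real Filter Topology

/-- Complete elliptic integral of the first kind. -/
noncomputable def K (k : ℝ) : ℝ := ∫ t in (0:ℝ)..(π/2), 1 / Real.sqrt (1 - k^2 * Real.sin t ^ 2)

namespace SM5


noncomputable def s : ℝ := Real.sqrt 5
noncomputable def t : ℝ := Real.sqrt (38 + 17 * s)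

lemma s_nonneg : 0 ≤ s := Real.sqrt_nonneg _
lemma hs : s ^ 2 = 5 := Real.sq_sqrt (by norm_num)
lemma s_lb : 2.2360679 < s := by
  nlinarith [hs, s_nonneg]
lemma s_ub : s < 2.2360680 := by
  nlinarith [hs, s_nonneg]
lemma t_nonneg : 0 ≤ t := Real.sqrt_nonneg _
lemma ht : t ^ 2 = 38 + 17 * s := Real.sq_sqrt (by nlinarith [s_lb])
lemma t_lb : 8.7185523 < t := by nlinarith [ht, t_nonneg, s_lb]
lemma t_ub : t < 8.7185526 := by nlinarith [ht, t_nonneg, s_ub]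

noncomputable def c1 : ℝ := (s - 1) / 2
noncomputable def c2 : ℝ := ((25 - 11 * s) * t - 1 - s) / 4
noncomputable def a1 : ℝ := ((7 * s - 15) * t - 2 * s) / 2
noncomputable def a2 : ℝ := (3 * s - 1 + (15 - 7 * s) * t) / 4
noncomputable def b1 : ℝ := (25 - 11 * s) * t / 2
noncomputable def b2 : ℝ := (3 * s - 5 + (29 * s - 65) * t) / 4
noncomputable def v1 : ℝ := (65 - 29 * s) * t / 2 - s
noncomputable def k2 : ℝ := (9 + 4 * s - 2 * t) / (18 + 8 * s)
noncomputable def l2 : ℝ := 1 - k2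

lemma a1_pos : 0 < a1 := by
  unfold a1; nlinarith [s_lb, s_ub, t_lb, t_ub]
lemma a2_pos : 0 < a2 := by
  unfold a2; nlinarith [s_lb, s_ub, t_lb, t_ub]
lemma b1_pos : 0 < b1 := by
  unfold b1; nlinarith [s_lb, s_ub, t_lb, t_ub]
lemma b2_pos : 0 < b2 := by
  unfold b2; nlinarith [s_lb, s_ub, t_lb, t_ub]
lemma c1_pos : 0 < c1 := by unfold c1; nlinarith [s_lb]
lemma c1_lt_one : c1 < 1 := by unfold c1; nlinarith [s_ub]
lemma c2_pos : 0 < c2 := by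
  unfold c2; nlinarith [s_lb, s_ub, t_lb, t_ub]
lemma v1_neg : v1 < 0 := by
  unfold v1; nlinarith [s_lb, s_ub, t_lb, t_ub]
lemma sv1_pos : 0 < s + v1 := by
  unfold v1; nlinarith [s_lb, s_ub, t_lb, t_ub]
lemma s_pos : 0 < s := lt_trans (by norm_num) s_lb
lemma Dq_pos : (0:ℝ) < 18 + 8 * s := by nlinarith [s_lb]
lemma k2_pos : 0 < k2 := by
  unfold k2
  apply div_pos _ Dq_pos
  nlinarith [s_lb, t_ub]
lemma k2_lt_one : k2 < 1 := by
  unfold k2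
  rw [div_lt_one Dq_pos]
  nlinarith [s_lb, t_lb]
lemma l2_pos : 0 < l2 := by unfold l2; linarith [k2_lt_one]
lemma l2_lt_one : l2 < 1 := by unfold l2; linarith [k2_pos]
lemma hk2eq : (18 + 8 * s) * k2 = 9 + 4 * s - 2 * t := by
  unfold k2; rw [mul_div_cancel₀]
  exact ne_of_gt Dq_pos


noncomputable def U (x : ℝ) : ℝ := s * x + a1 * x ^ 3 + a2 * x ^ 5
noncomputable def Up (x : ℝ) : ℝ := s + 3 * a1 * x ^ 2 + 5 * a2 * x ^ 4
noncomputable def Dp (x : ℝ) : ℝ := 1 + b1 * x ^ 2 + b2 * x ^ 4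
noncomputable def Dpp (x : ℝ) : ℝ := 2 * b1 * x + 4 * b2 * x ^ 3
noncomputable def R (x : ℝ) : ℝ := U x / Dp x
noncomputable def W (x : ℝ) : ℝ := Up x * Dp x - U x * Dpp x
noncomputable def qm (x : ℝ) : ℝ := 1 - c1 * x + c2 * x ^ 2
noncomputable def qp (x : ℝ) : ℝ := 1 + c1 * x + c2 * x ^ 2
noncomputable def V (x : ℝ) : ℝ := s + v1 * x ^ 2 + b2 * x ^ 4

lemma hI1 (x : ℝ) : Dp x - U x = (1 - x) * qm x ^ 2 := by
  simp only [Dp, U, qm, a1, a2, b1, b2, c1, c2]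
  linear_combination ((-1/4:ℝ)*x^2 + (4755/16:ℝ)*x^4 + (-4751/16:ℝ)*x^5 + (-11/4:ℝ)*t*x^3 + (11/8:ℝ)*t*x^4 + (11/8:ℝ)*t*x^5 + (-2057/16:ℝ)*s*x^4 + (2057/16:ℝ)*s*x^5) * hs + ((-625/16:ℝ)*x^4 + (625/16:ℝ)*x^5 + (275/8:ℝ)*s*x^4 + (-275/8:ℝ)*s*x^5 + (-121/16:ℝ)*s^2*x^4 + (121/16:ℝ)*s^2*x^5) * ht

lemma hI2 (x : ℝ) : Dp x + U x = (1 + x) * qp x ^ 2 := by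
  simp only [Dp, U, qp, a1, a2, b1, b2, c1, c2]
  linear_combination ((-1/4:ℝ)*x^2 + (4755/16:ℝ)*x^4 + (4751/16:ℝ)*x^5 + (11/4:ℝ)*t*x^3 + (11/8:ℝ)*t*x^4 + (-11/8:ℝ)*t*x^5 + (-2057/16:ℝ)*s*x^4 + (-2057/16:ℝ)*s*x^5) * hs + ((-625/16:ℝ)*x^4 + (-625/16:ℝ)*x^5 + (275/8:ℝ)*s*x^4 + (275/8:ℝ)*s*x^5 + (-121/16:ℝ)*s^2*x^4 + (-121/16:ℝ)*s^2*x^5) * ht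

lemma hI3 (x : ℝ) : W x = qm x * qp x * V x := by
  simp only [W, Up, Dp, Dpp, U, qm, qp, V, a1, a2, b1, b2, c1, c2, v1]
  linear_combination ((3800:ℝ)*x^4 + (-39327/16:ℝ)*x^6 + (30585/64:ℝ)*x^8 + (11:ℝ)*t*x^2 + (-95/8:ℝ)*t*x^4 + (308861/32:ℝ)*t*x^6 + (-308705/64:ℝ)*t*x^8 + (1/4:ℝ)*s*x^2 + (-22181/16:ℝ)*s*x^4 + (115/16:ℝ)*s*x^6 + (6151/16:ℝ)*s*x^8 + (-5:ℝ)*s*t*x^4 + (-135691/16:ℝ)*s*t*x^6 + (135709/32:ℝ)*s*t*x^8 + (-2057/16:ℝ)*s^2*x^4 + (935/2:ℝ)*s^2*x^6 + (-17017/64:ℝ)*s^2*x^8 + (59653/32:ℝ)*s^2*t*x^6 + (-59653/64:ℝ)*s^2*t*x^8) * hs + ((-500:ℝ)*x^4 + (5175/16:ℝ)*x^6 + (-4025/64:ℝ)*x^8 + (-40625/32:ℝ)*t*x^6 + (40625/64:ℝ)*t*x^8 + (6495/16:ℝ)*s*x^4 + (-1165/8:ℝ)*s*x^6 + (-1435/64:ℝ)*s*x^8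 + (53875/32:ℝ)*s*t*x^6 + (-53875/64:ℝ)*s*t*x^8 + (-517/8:ℝ)*s^2*x^4 + (-977/16:ℝ)*s^2*x^6 + (3685/64:ℝ)*s^2*x^8 + (-23815/32:ℝ)*s^2*t*x^6 + (23815/64:ℝ)*s^2*t*x^8 + (-121/16:ℝ)*s^3*x^4 + (55/2:ℝ)*s^3*x^6 + (-1001/64:ℝ)*s^3*x^8 + (3509/32:ℝ)*s^3*t*x^6 + (-3509/64:ℝ)*s^3*t*x^8) * ht

lemma hI4 (x : ℝ) :
    5 * ((18 + 8 * s) * Dp x ^ 2 - (9 + 4 * s + 2 * t) * U x ^ 2)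
      = ((18 + 8 * s) - (9 + 4 * s - 2 * t) * x ^ 2) * V x ^ 2 := by
  simp only [Dp, U, V, a1, a2, b1, b2, v1]
  linear_combination ((-18:ℝ) + (37665:ℝ)*x^4 + (80370:ℝ)*x^6 + (-184915/2:ℝ)*x^8 + (-51119/4:ℝ)*x^10 + (-450:ℝ)*t*x^2 + (585:ℝ)*t*x^4 + (20600:ℝ)*t*x^6 + (-20735:ℝ)*t*x^8 + (19973/4:ℝ)*t*x^10 + (-8:ℝ)*s + (-1502:ℝ)*s*x^4 + (1118:ℝ)*s*x^6 + (1309/2:ℝ)*s*x^8 + (-525/4:ℝ)*s*x^10 + (232:ℝ)*s*t*x^2 + (-604:ℝ)*s*t*x^4 + (-8887:ℝ)*s*t*x^6 + (9259:ℝ)*s*t*x^8 + (-8847/4:ℝ)*s*t*x^10 + (-8024:ℝ)*s^2*x^4 + (-15504:ℝ)*s^2*x^6 + (18462:ℝ)*s^2*x^8 + (2533:ℝ)*s^2*x^10) * hs + ((-4950:ℝ)*x^4 + (-10575:ℝ)*x^6 + (24325/2:ℝ)*x^8 + (6725/4:ℝ)*x^10 + (-2675:ℝ)*t*x^6 + (2675:ℝ)*t*x^8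 + (-2675/4:ℝ)*t*x^10 + (2410:ℝ)*s*x^4 + (4585:ℝ)*s*x^6 + (-5525:ℝ)*s*x^8 + (-735:ℝ)*s*x^10 + (2410:ℝ)*s*t*x^6 + (-2410:ℝ)*s*t*x^8 + (1205/2:ℝ)*s*t*x^10 + (966:ℝ)*s^2*x^4 + (2106:ℝ)*s^2*x^6 + (-4783/2:ℝ)*s^2*x^8 + (-1361/4:ℝ)*s^2*x^10 + (-543:ℝ)*s^2*t*x^6 + (543:ℝ)*s^2*t*x^8 + (-543/4:ℝ)*s^2*t*x^10 + (-472:ℝ)*s^3*x^4 + (-912:ℝ)*s^3*x^6 + (1086:ℝ)*s^3*x^8 + (149:ℝ)*s^3*x^10) * ht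


-- positivity

lemma Dp_pos (x : ℝ) : 0 < Dp x := by
  unfold Dp
  nlinarith [mul_nonneg b1_pos.le (sq_nonneg x), mul_nonneg b2_pos.le (pow_nonneg (sq_nonneg x) 2)]

lemma U_nonneg {x : ℝ} (hx : 0 ≤ x) : 0 ≤ U x := by
  unfold U
  have h3 : (0:ℝ) ≤ x ^ 3 := pow_nonneg hx 3
  have h5 : (0:ℝ) ≤ x ^ 5 := pow_nonneg hx 5
  nlinarith [mul_nonneg a1_pos.le h3, mul_nonneg a2_pos.le h5, mul_nonneg s_pos.le hx]

lemma qm_pos {x : ℝ} (hx0 : 0 ≤ x) (hx1 : x ≤ 1) : 0 < qm x := by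
  unfold qm
  nlinarith [mul_nonneg c2_pos.le (sq_nonneg x), mul_nonneg c1_pos.le (sub_nonneg.mpr hx1),
    c1_lt_one, c1_pos]

lemma qp_pos {x : ℝ} (hx0 : 0 ≤ x) : 0 < qp x := by
  unfold qp
  nlinarith [mul_nonneg c2_pos.le (sq_nonneg x), mul_nonneg c1_pos.le hx0]

lemma V_pos {x : ℝ} (hx0 : 0 ≤ x) (hx1 : x ≤ 1) : 0 < V x := by
  unfold V
  nlinarith [mul_nonneg b2_pos.le (pow_nonneg (sq_nonneg x) 2), sv1_pos, v1_neg, sq_nonneg x,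
    mul_nonneg (mul_nonneg (neg_nonneg.mpr v1_neg.le) (sub_nonneg.mpr hx1)) (add_nonneg hx0 (by norm_num : (0:ℝ) ≤ 1))]

lemma W_pos {x : ℝ} (hx0 : 0 ≤ x) (hx1 : x ≤ 1) : 0 < W x := by
  rw [hI3 x]
  exact mul_pos (mul_pos (qm_pos hx0 hx1) (qp_pos hx0)) (V_pos hx0 hx1)

lemma DmU_pos {x : ℝ} (hx0 : 0 ≤ x) (hx1 : x < 1) : 0 < Dp x - U x := by
  rw [hI1 x]
  exact mul_pos (by linarith) (pow_pos (qm_pos hx0 hx1.le) 2)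

lemma R_nonneg {x : ℝ} (hx : 0 ≤ x) : 0 ≤ R x :=
  div_nonneg (U_nonneg hx) (Dp_pos x).le

lemma R_lt_one {x : ℝ} (hx0 : 0 ≤ x) (hx1 : x < 1) : R x < 1 := by
  rw [R, div_lt_one (Dp_pos x)]
  linarith [DmU_pos hx0 hx1]

lemma R_one : R 1 = 1 := by
  have h := hI1 1
  simp at h
  rw [R]
  rw [show U 1 = Dp 1 by linarith]
  exact div_self (Dp_pos 1).ne'

lemma R_zero : R 0 = 0 := by simp [R, U]

-- derivative
lemma hasDerivAt_R (x : ℝ) : HasDerivAt R (W x / Dp x ^ 2) x := by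
  have hU0 := (((hasDerivAt_id x).const_mul s).add ((hasDerivAt_pow 3 x).const_mul a1)).add
      ((hasDerivAt_pow 5 x).const_mul a2)
  have hD0 := ((hasDerivAt_const x (1:ℝ)).add ((hasDerivAt_pow 2 x).const_mul b1)).add
      ((hasDerivAt_pow 4 x).const_mul b2)
  have hU : HasDerivAt U (Up x) x := by
    have heq : s * 1 + a1 * (↑(3:ℕ) * x ^ (3-1)) + a2 * (↑(5:ℕ) * x ^ (5-1)) = Up x := by
      simp [Up]; push_cast; ring
    exact heq ▸ hU0
  have hD : HasDerivAt Dp (Dpp x) x := by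
    have heq : 0 + b1 * (↑(2:ℕ) * x ^ (2-1)) + b2 * (↑(4:ℕ) * x ^ (4-1)) = Dpp x := by
      simp [Dpp]; push_cast; ring
    exact heq ▸ hD0
  exact hU.div hD (Dp_pos x).ne'

-- multiplied identities
lemma em1 (x : ℝ) : (1 - R x ^ 2) * Dp x ^ 2 = (1 - x ^ 2) * (qm x * qp x) ^ 2 := by
  have em0 : (1 - R x ^ 2) * Dp x ^ 2 = Dp x ^ 2 - U x ^ 2 := by
    rw [R]
    field_simp [(Dp_pos x).ne']
  rw [em0]
  linear_combination (Dp x + U x) * hI1 x + ((1 - x) * qm x ^ 2) * hI2 x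

lemma hI4' (x : ℝ) : 5 * (Dp x ^ 2 - l2 * U x ^ 2) = (1 - k2 * x ^ 2) * V x ^ 2 := by
  apply mul_left_cancel₀ Dq_pos.ne'
  have h4 := hI4 x
  unfold l2
  linear_combination h4 + (5 * U x ^ 2 + x ^ 2 * V x ^ 2) * hk2eq

lemma em2 (x : ℝ) : (1 - l2 * R x ^ 2) * (5 * Dp x ^ 2) = (1 - k2 * x ^ 2) * V x ^ 2 := by
  have em0 : (1 - l2 * R x ^ 2) * (5 * Dp x ^ 2) = 5 * (Dp x ^ 2 - l2 * U x ^ 2) := by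
    rw [R]; field_simp [(Dp_pos x).ne']
  rw [em0, hI4']

lemma one_sub_R_sq_pos {x : ℝ} (hx0 : 0 ≤ x) (hx1 : x < 1) : 0 < 1 - R x ^ 2 := by
  have h := R_lt_one hx0 hx1
  have h0 := R_nonneg hx0
  nlinarith

lemma one_sub_l2R_sq_pos {x : ℝ} (hx0 : 0 ≤ x) (hx1 : x < 1) : 0 < 1 - l2 * R x ^ 2 := by
  have h := R_lt_one hx0 hx1
  have h0 := R_nonneg hx0
  nlinarith [l2_pos, l2_lt_one]

lemma A_pos {x : ℝ} (hx0 : 0 ≤ x) (hx1 : x < 1) : 0 < (1 - x ^ 2) * (1 - k2 * x ^ 2) := by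
  have h1 : x ^ 2 < 1 := by nlinarith
  have h2 : k2 * x ^ 2 < 1 := by nlinarith [k2_pos, k2_lt_one, sq_nonneg x]
  nlinarith

-- the key pointwise integrand identity
lemma integrand_eq {x : ℝ} (hx0 : 0 ≤ x) (hx1 : x < 1) :
    W x / Dp x ^ 2 * (1 / Real.sqrt ((1 - R x ^ 2) * (1 - l2 * R x ^ 2)))
      = Real.sqrt 5 * (1 / Real.sqrt ((1 - x ^ 2) * (1 - k2 * x ^ 2))) := by
  have hDp := Dp_pos x
  have hW := W_pos hx0 hx1.le
  have hB : 0 < (1 - R x ^ 2) * (1 - l2 * R x ^ 2) :=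
    mul_pos (one_sub_R_sq_pos hx0 hx1) (one_sub_l2R_sq_pos hx0 hx1)
  have hA : 0 < (1 - x ^ 2) * (1 - k2 * x ^ 2) := A_pos hx0 hx1
  have hsqB : (0:ℝ) < Real.sqrt ((1 - R x ^ 2) * (1 - l2 * R x ^ 2)) := Real.sqrt_pos.mpr hB
  have hsqA : (0:ℝ) < Real.sqrt ((1 - x ^ 2) * (1 - k2 * x ^ 2)) := Real.sqrt_pos.mpr hA
  have hL : 0 ≤ W x / Dp x ^ 2 * (1 / Real.sqrt ((1 - R x ^ 2) * (1 - l2 * R x ^ 2))) :=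
    mul_nonneg (div_nonneg hW.le (sq_nonneg _)) (by positivity)
  have hR : 0 ≤ Real.sqrt 5 * (1 / Real.sqrt ((1 - x ^ 2) * (1 - k2 * x ^ 2))) := by positivity
  rw [← Real.sqrt_sq hL, ← Real.sqrt_sq hR]
  apply congrArg Real.sqrt
  have hb2 : Real.sqrt ((1 - R x ^ 2) * (1 - l2 * R x ^ 2)) ^ 2
      = (1 - R x ^ 2) * (1 - l2 * R x ^ 2) := Real.sq_sqrt hB.le
  have ha2 : Real.sqrt ((1 - x ^ 2) * (1 - k2 * x ^ 2)) ^ 2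
      = (1 - x ^ 2) * (1 - k2 * x ^ 2) := Real.sq_sqrt hA.le
  have h5 : Real.sqrt 5 ^ 2 = 5 := Real.sq_sqrt (by norm_num)
  have master : W x ^ 2 * ((1 - x ^ 2) * (1 - k2 * x ^ 2))
      = 5 * (Dp x ^ 2) ^ 2 * ((1 - R x ^ 2) * (1 - l2 * R x ^ 2)) := by
    have e1 := em1 x
    have e2 := em2 x
    have e3 := hI3 x
    linear_combination ((W x + qm x * qp x * V x) * ((1 - x ^ 2) * (1 - k2 * x ^ 2))) * e3
      - ((1 - x ^ 2) * (qm x * qp x) ^ 2) * e2 - (5 * Dp x ^ 2 * (1 - l2 * R x ^ 2)) * e1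
  rw [mul_pow, mul_pow, div_pow, one_div, one_div, inv_pow, inv_pow, hb2, ha2, h5,
    ← div_eq_mul_inv, ← div_eq_mul_inv, div_div,
    div_eq_div_iff (by positivity) hA.ne']
  linear_combination master


-- ============ analytic part ============

noncomputable def J (c X : ℝ) : ℝ := ∫ x in (0:ℝ)..X, 1 / Real.sqrt ((1 - x ^ 2) * (1 - c * x ^ 2))
noncomputable def H (c b : ℝ) : ℝ := ∫ τ in (0:ℝ)..b, 1 / Real.sqrt (1 - c * Real.sin τ ^ 2)

lemma Apos' {c x : ℝ} (hc0 : 0 ≤ c) (hc1 : c < 1) (hx0 : 0 ≤ x) (hx1 : x < 1) :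
    0 < (1 - x ^ 2) * (1 - c * x ^ 2) := by
  have h1 : x ^ 2 < 1 := by nlinarith
  have h2 : c * x ^ 2 < 1 := by nlinarith [sq_nonneg x]
  nlinarith

lemma contAt_g {c y : ℝ} (hc0 : 0 ≤ c) (hc1 : c < 1) (hy0 : 0 ≤ y) (hy1 : y < 1) :
    ContinuousAt (fun y : ℝ => 1 / Real.sqrt ((1 - y ^ 2) * (1 - c * y ^ 2))) y := by
  have harg : 0 < (1 - y ^ 2) * (1 - c * y ^ 2) := Apos' hc0 hc1 hy0 hy1
  have h1 : ContinuousAt (fun y : ℝ => (1 - y ^ 2) * (1 - c * y ^ 2)) y := by fun_prop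
  have h2 : ContinuousAt (fun y : ℝ => Real.sqrt ((1 - y ^ 2) * (1 - c * y ^ 2))) y :=
    Real.continuous_sqrt.continuousAt.comp h1
  exact ContinuousAt.div continuousAt_const h2 (Real.sqrt_pos.mpr harg).ne'

lemma sin_subst {c : ℝ} (hc0 : 0 ≤ c) (hc1 : c < 1) {b : ℝ} (hb0 : 0 ≤ b) (hb1 : b < π / 2) :
    H c b = J c (Real.sin b) := by
  have hpi : (0:ℝ) < π / 2 := by positivity
  have huIcc : Set.uIcc (0:ℝ) b = Set.Icc 0 b := Set.uIcc_of_le hb0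
  have hsinlt : ∀ τ : ℝ, 0 ≤ τ → τ < π / 2 → Real.sin τ < 1 := by
    intro τ h0 h1
    have := Real.sin_lt_sin_of_lt_of_le_pi_div_two (by linarith : -(π/2) ≤ τ) le_rfl h1
    simpa [Real.sin_pi_div_two] using this
  have h : ∀ τ ∈ Set.uIcc (0:ℝ) b, HasDerivAt Real.sin (Real.cos τ) τ :=
    fun τ _ => Real.hasDerivAt_sin τ
  have h' : ContinuousOn Real.cos (Set.uIcc (0:ℝ) b) := Real.continuous_cos.continuousOn
  have hg : ContinuousOn (fun y : ℝ => 1 / Real.sqrt ((1 - y ^ 2) * (1 - c * y ^ 2)))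
      (Real.sin '' Set.uIcc (0:ℝ) b) := by
    rintro y ⟨τ, hτ, rfl⟩
    rw [huIcc] at hτ
    have h0 : 0 ≤ Real.sin τ :=
      Real.sin_nonneg_of_nonneg_of_le_pi hτ.1 (by linarith [hτ.2, Real.pi_pos])
    have h1 : Real.sin τ < 1 := hsinlt τ hτ.1 (lt_of_le_of_lt hτ.2 hb1)
    exact (contAt_g hc0 hc1 h0 h1).continuousWithinAt
  have key := intervalIntegral.integral_comp_smul_deriv' h h' hg
  rw [Real.sin_zero] at key
  unfold H J
  rw [← key]
  apply intervalIntegral.integral_congr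
  intro τ hτ
  rw [huIcc] at hτ
  have hcos : 0 < Real.cos τ :=
    Real.cos_pos_of_mem_Ioo ⟨by linarith [hτ.1], lt_of_le_of_lt hτ.2 hb1⟩
  have hsin0 : 0 ≤ Real.sin τ :=
    Real.sin_nonneg_of_nonneg_of_le_pi hτ.1 (by linarith [hτ.2, Real.pi_pos])
  have hc2 : 0 < 1 - c * Real.sin τ ^ 2 := by
    nlinarith [Real.sin_sq_le_one τ, sq_nonneg (Real.sin τ)]
  have h1sub : (1:ℝ) - Real.sin τ ^ 2 = Real.cos τ ^ 2 := by
    have := Real.sin_sq_add_cos_sq τ; linarith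
  simp only [Function.comp_apply, smul_eq_mul]
  rw [h1sub, Real.sqrt_mul (sq_nonneg _), Real.sqrt_sq hcos.le]
  rw [one_div, one_div, mul_inv, ← mul_assoc, mul_inv_cancel₀ hcos.ne', one_mul]

lemma continuous_U : Continuous U := by unfold U; fun_prop
lemma continuous_Dp : Continuous Dp := by unfold Dp; fun_prop
lemma continuous_W : Continuous W := by unfold W Up U Dp Dpp; fun_prop
lemma continuous_R : Continuous R := by
  unfold R
  exact continuous_U.div continuous_Dp fun x => (Dp_pos x).ne'

lemma R_subst {X : ℝ} (hX0 : 0 ≤ X) (hX1 : X < 1) : J l2 (R X) = Real.sqrt 5 * J k2 X := by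
  have huIcc : Set.uIcc (0:ℝ) X = Set.Icc 0 X := Set.uIcc_of_le hX0
  have h : ∀ x ∈ Set.uIcc (0:ℝ) X, HasDerivAt R (W x / Dp x ^ 2) x := fun x _ => hasDerivAt_R x
  have h' : ContinuousOn (fun x => W x / Dp x ^ 2) (Set.uIcc (0:ℝ) X) :=
    (continuous_W.div (continuous_Dp.pow 2) fun x => pow_ne_zero 2 (Dp_pos x).ne').continuousOn
  have hg : ContinuousOn (fun y : ℝ => 1 / Real.sqrt ((1 - y ^ 2) * (1 - l2 * y ^ 2)))
      (R '' Set.uIcc (0:ℝ) X) := by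
    rintro y ⟨x, hx, rfl⟩
    rw [huIcc] at hx
    exact (contAt_g l2_pos.le l2_lt_one (R_nonneg hx.1)
      (R_lt_one hx.1 (lt_of_le_of_lt hx.2 hX1))).continuousWithinAt
  have key := intervalIntegral.integral_comp_smul_deriv' h h' hg
  rw [R_zero] at key
  unfold J
  rw [← key]
  rw [show (Real.sqrt 5 * ∫ x in (0:ℝ)..X, 1 / Real.sqrt ((1 - x ^ 2) * (1 - k2 * x ^ 2)))
      = ∫ x in (0:ℝ)..X, Real.sqrt 5 * (1 / Real.sqrt ((1 - x ^ 2) * (1 - k2 * x ^ 2)))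
    from (intervalIntegral.integral_const_mul _ _).symm]
  apply intervalIntegral.integral_congr
  intro x hx
  rw [huIcc] at hx
  simp only [Function.comp_apply, smul_eq_mul]
  exact integrand_eq hx.1 (lt_of_le_of_lt hx.2 hX1)

lemma continuous_H {c : ℝ} (hc0 : 0 ≤ c) (hc1 : c < 1) : Continuous (H c) := by
  unfold H
  apply intervalIntegral.continuous_primitive
  intro a b
  apply Continuous.intervalIntegrable
  have hne : ∀ τ : ℝ, Real.sqrt (1 - c * Real.sin τ ^ 2) ≠ 0 := by
    intro τ
    have : 0 < 1 - c * Real.sin τ ^ 2 := by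
      nlinarith [Real.sin_sq_le_one τ, sq_nonneg (Real.sin τ)]
    exact (Real.sqrt_pos.mpr this).ne'
  exact continuous_const.div (Real.continuous_sqrt.comp (by fun_prop)) hne

lemma K_eq {c : ℝ} (hc : 0 ≤ c) : K (Real.sqrt c) = H c (π / 2) := by
  unfold K H
  rw [Real.sq_sqrt hc]

lemma H_k2_pos : 0 < H k2 (π / 2) := by
  unfold H
  apply intervalIntegral.intervalIntegral_pos_of_pos_on
  · apply Continuous.intervalIntegrable
    have hne : ∀ τ : ℝ, Real.sqrt (1 - k2 * Real.sin τ ^ 2) ≠ 0 := by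
      intro τ
      have : 0 < 1 - k2 * Real.sin τ ^ 2 := by
        nlinarith [Real.sin_sq_le_one τ, sq_nonneg (Real.sin τ), k2_pos, k2_lt_one]
      exact (Real.sqrt_pos.mpr this).ne'
    exact continuous_const.div (Real.continuous_sqrt.comp (by fun_prop)) hne
  · intro τ _
    have : 0 < 1 - k2 * Real.sin τ ^ 2 := by
      nlinarith [Real.sin_sq_le_one τ, sq_nonneg (Real.sin τ), k2_pos, k2_lt_one]
    positivity
  · positivity

lemma key_relation : K (Real.sqrt l2) = Real.sqrt 5 * K (Real.sqrt k2) := by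
  rw [K_eq l2_pos.le, K_eq k2_pos.le]
  have hpi : (0:ℝ) < π / 2 := by positivity
  have hne : (𝓝[<] (π/2)).NeBot := nhdsLT_neBot _
  have hφ : Continuous fun b : ℝ => Real.arcsin (R (Real.sin b)) :=
    Real.continuous_arcsin.comp (continuous_R.comp Real.continuous_sin)
  have hφval : Real.arcsin (R (Real.sin (π/2))) = π / 2 := by
    rw [Real.sin_pi_div_two, R_one, Real.arcsin_one]
  have h1 : Filter.Tendsto (fun b => Real.sqrt 5 * H k2 b) (𝓝[<] (π/2))
      (nhds (Real.sqrt 5 * H k2 (π/2))) :=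
    ((continuous_const.mul (continuous_H k2_pos.le k2_lt_one)).tendsto _).mono_left
      nhdsWithin_le_nhds
  have h2 : Filter.Tendsto (fun b => H l2 (Real.arcsin (R (Real.sin b)))) (𝓝[<] (π/2))
      (nhds (H l2 (π/2))) := by
    have := ((continuous_H l2_pos.le l2_lt_one).comp hφ).tendsto (π/2)
    rw [Function.comp_apply, hφval] at this  -- may need adjusting
    exact this.mono_left nhdsWithin_le_nhds
  have heq : ∀ᶠ b in 𝓝[<] (π/2), H l2 (Real.arcsin (R (Real.sin b))) = Real.sqrt 5 * H k2 b := by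
    filter_upwards [Ioo_mem_nhdsLT_of_mem (by constructor <;> linarith : (π/2) ∈ Set.Ioc (0:ℝ) (π/2))]
    intro b hb
    have hb0 : 0 ≤ b := hb.1.le
    have hb1 : b < π / 2 := hb.2
    set X := Real.sin b with hX
    have hX0 : 0 ≤ X :=
      Real.sin_nonneg_of_nonneg_of_le_pi hb0 (by linarith [Real.pi_pos])
    have hX1 : X < 1 := by
      have := Real.sin_lt_sin_of_lt_of_le_pi_div_two (by linarith : -(π/2) ≤ b) le_rfl hb1
      simpa [Real.sin_pi_div_two] using this
    have hR0 : 0 ≤ R X := R_nonneg hX0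
    have hR1 : R X < 1 := R_lt_one hX0 hX1
    have harc0 : 0 ≤ Real.arcsin (R X) := Real.arcsin_nonneg.mpr hR0
    have harc1 : Real.arcsin (R X) < π / 2 := Real.arcsin_lt_pi_div_two.mpr hR1
    have hsinarc : Real.sin (Real.arcsin (R X)) = R X :=
      Real.sin_arcsin (by linarith) hR1.le
    calc H l2 (Real.arcsin (R X)) = J l2 (Real.sin (Real.arcsin (R X))) :=
          sin_subst l2_pos.le l2_lt_one harc0 harc1
      _ = J l2 (R X) := by rw [hsinarc]
      _ = Real.sqrt 5 * J k2 X := R_subst hX0 hX1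
      _ = Real.sqrt 5 * H k2 b := by rw [sin_subst k2_pos.le k2_lt_one hb0 hb1]
  exact tendsto_nhds_unique h2 (h1.congr' (heq.mono fun b hb => hb.symm))

end SM5

theorem singular_modulus_five :
    Real.sqrt ((9 + 4 * Real.sqrt 5 - 2 * Real.sqrt (38 + 17 * Real.sqrt 5)) /
        (18 + 8 * Real.sqrt 5)) ∈ Set.Ioo (0:ℝ) 1 ∧
    K (Real.sqrt (1 - (Real.sqrt ((9 + 4 * Real.sqrt 5 - 2 * Real.sqrt (38 + 17 * Real.sqrt 5)) /
          (18 + 8 * Real.sqrt 5)))^2)) /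
      K (Real.sqrt ((9 + 4 * Real.sqrt 5 - 2 * Real.sqrt (38 + 17 * Real.sqrt 5)) /
          (18 + 8 * Real.sqrt 5))) = Real.sqrt 5 := by
  have e2 : (9 + 4 * Real.sqrt 5 - 2 * Real.sqrt (38 + 17 * Real.sqrt 5)) /
      (18 + 8 * Real.sqrt 5) = SM5.k2 := rfl
  rw [e2]
  have hKpos : 0 < K (Real.sqrt SM5.k2) := by
    rw [SM5.K_eq SM5.k2_pos.le]; exact SM5.H_k2_pos
  refine ⟨⟨Real.sqrt_pos.mpr SM5.k2_pos, ?_⟩, ?_⟩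
  · rw [Real.sqrt_lt' one_pos]
    simpa using SM5.k2_lt_one
  · rw [Real.sq_sqrt SM5.k2_pos.le]
    rw [show (1 : ℝ) - SM5.k2 = SM5.l2 from rfl, SM5.key_relation]
    exact mul_div_cancel_right₀ _ hKpos.ne'
end

section
/- The singular modulus for r = 1/5 is k_{1/5} = √((9 + 4√5 + 2√(38 + 17√5))/(18 + 8√5)); that is, this value of k ∈ (0,1) satisfies K(√(1−k²))/K(k) = 1/√5. -/
set_option maxHeartbeats 2000000

open Real intervalIntegral

lemma key_subst (a b M : ℝ) (ha : a^2 < 1) (hb : b^2 < 1) (hM : 0 < M)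
    (P Q P' Q' F G : ℝ → ℝ)
    (hP : ∀ x, HasDerivAt P (P' x) x) (hQ : ∀ x, HasDerivAt Q (Q' x) x)
    (hGc : Continuous G)
    (hQpos : ∀ x ∈ Set.Icc (-1:ℝ) 1, 0 < Q x)
    (hFpos : ∀ x ∈ Set.Icc (0:ℝ) 1, 0 < F x)
    (hGpos : ∀ x ∈ Set.Icc (0:ℝ) 1, 0 < G x)
    (hI1 : ∀ x, Q x^2 - P x^2 = (1-x^2) * F x^2)
    (hI2 : ∀ x, Q x^2 - b^2 * P x^2 = (1-a^2*x^2) * G x^2)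
    (hI3 : ∀ x, P' x * Q x - P x * Q' x = M * (F x * G x))
    (hP0 : P 0 = 0) (hP1 : P 1 = Q 1) :
    K b = M * K a ∧ 0 < K a := by
  have hPc : Continuous P := by
    rw [continuous_iff_continuousAt]; exact fun x => (hP x).continuousAt
  have hQc : Continuous Q := by
    rw [continuous_iff_continuousAt]; exact fun x => (hQ x).continuousAt
  have hb1 : ∀ u : ℝ, 0 < 1 - b^2 * Real.sin u ^ 2 := by
    intro u
    nlinarith [Real.sin_sq_le_one u, sq_nonneg b,
      mul_le_mul_of_nonneg_left (Real.sin_sq_le_one u) (sq_nonneg b)]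
  have ha1 : ∀ u : ℝ, 0 < 1 - a^2 * Real.sin u ^ 2 := by
    intro u
    nlinarith [Real.sin_sq_le_one u, sq_nonneg a,
      mul_le_mul_of_nonneg_left (Real.sin_sq_le_one u) (sq_nonneg a)]
  have hfb : Continuous (fun u => 1 / Real.sqrt (1 - b^2 * Real.sin u ^ 2)) := by
    apply Continuous.div continuous_const
    · exact (continuous_const.sub ((continuous_const.mul
        ((Real.continuous_sin).pow 2)))).sqrt
    · intro u; exact (Real.sqrt_pos.2 (hb1 u)).ne'
  have hfa : Continuous (fun u => 1 / Real.sqrt (1 - a^2 * Real.sin u ^ 2)) := by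
    apply Continuous.div continuous_const
    · exact (continuous_const.sub ((continuous_const.mul
        ((Real.continuous_sin).pow 2)))).sqrt
    · intro u; exact (Real.sqrt_pos.2 (ha1 u)).ne'
  set s : ℝ → ℝ := fun t => Real.arcsin (P (Real.sin t) / Q (Real.sin t)) with hs
  set S' : ℝ → ℝ := fun t => M * G (Real.sin t) / Q (Real.sin t) with hS'
  have hQpos' : ∀ t : ℝ, 0 < Q (Real.sin t) := fun t =>
    hQpos _ ⟨Real.neg_one_le_sin t, Real.sin_le_one t⟩
  -- Step A : substitution for T < π/2
  have stepA : ∀ T, 0 ≤ T → T < π/2 →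
      (∫ u in (0:ℝ)..(s T), 1 / Real.sqrt (1 - b^2 * Real.sin u ^ 2)) =
        M * ∫ t in (0:ℝ)..T, 1 / Real.sqrt (1 - a^2 * Real.sin t ^ 2) := by
    intro T hT0 hT
    have huIcc : Set.uIcc (0:ℝ) T = Set.Icc 0 T := Set.uIcc_of_le hT0
    have hmem : ∀ t ∈ Set.Icc (0:ℝ) T, Real.sin t ∈ Set.Icc (0:ℝ) 1 ∧ Real.sin t < 1
        ∧ 0 < Real.cos t := by
      intro t ht
      obtain ⟨ht0, htT⟩ := ht
      have h1 : Real.sin t < 1 := by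
        have := Real.sin_lt_sin_of_lt_of_le_pi_div_two (x := t) (y := π/2)
          (by linarith [Real.pi_pos]) le_rfl (lt_of_le_of_lt htT hT)
        simpa using this
      refine ⟨⟨Real.sin_nonneg_of_nonneg_of_le_pi ht0 (by nlinarith [Real.pi_pos]), h1.le⟩, h1, ?_⟩
      exact Real.cos_pos_of_mem_Ioo ⟨by nlinarith [Real.pi_pos], lt_of_le_of_lt htT hT⟩
    have hylt : ∀ t ∈ Set.Icc (0:ℝ) T, (P (Real.sin t) / Q (Real.sin t))^2 < 1 := by
      intro t ht
      obtain ⟨hx01, hx1, _⟩ := hmem t ht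
      have hQt := hQpos' t
      have hF := hFpos _ hx01
      have h := hI1 (Real.sin t)
      rw [div_pow, div_lt_one (by positivity)]
      nlinarith [mul_pos (show (0:ℝ) < 1 - Real.sin t^2 by nlinarith [hx01.1]) (pow_pos hF 2)]
    have hsderiv : ∀ t ∈ Set.Icc (0:ℝ) T, HasDerivAt s (S' t) t := by
      intro t ht
      obtain ⟨hx01, hx1, hcos⟩ := hmem t ht
      have hQt := hQpos' t
      have hF := hFpos _ hx01
      have hG := hGpos _ hx01
      have hy2 := hylt t ht
      have hy1 : |P (Real.sin t) / Q (Real.sin t)| < 1 := (sq_lt_one_iff_abs_lt_one _).1 hy2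
      have hyd : HasDerivAt (fun u => P (Real.sin u) / Q (Real.sin u))
          (((P' (Real.sin t) * Q (Real.sin t) - P (Real.sin t) * Q' (Real.sin t))
            / Q (Real.sin t) ^ 2) * Real.cos t) t := by
        have h1 : HasDerivAt (fun u => P (Real.sin u)) (P' (Real.sin t) * Real.cos t) t :=
          (hP (Real.sin t)).comp t (Real.hasDerivAt_sin t)
        have h2 : HasDerivAt (fun u => Q (Real.sin u)) (Q' (Real.sin t) * Real.cos t) t :=
          (hQ (Real.sin t)).comp t (Real.hasDerivAt_sin t)
        have := h1.div h2 hQt.ne'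
        refine this.congr_deriv ?_
        ring
      have harc : HasDerivAt Real.arcsin
          (1 / Real.sqrt (1 - (P (Real.sin t) / Q (Real.sin t)) ^ 2))
          (P (Real.sin t) / Q (Real.sin t)) :=
        Real.hasDerivAt_arcsin (by intro h; rw [h] at hy1; simp at hy1)
          (by intro h; rw [h] at hy1; simp at hy1)
      have hcomp := harc.comp t hyd
      have hsqval : Real.sqrt (1 - (P (Real.sin t) / Q (Real.sin t)) ^ 2)
          = Real.cos t * F (Real.sin t) / Q (Real.sin t) := by
        have h1 : 1 - (P (Real.sin t) / Q (Real.sin t)) ^ 2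
            = (Real.cos t * F (Real.sin t) / Q (Real.sin t)) ^ 2 := by
          have hc : Real.cos t ^ 2 = 1 - Real.sin t ^ 2 := Real.cos_sq' t
          field_simp
          linear_combination hI1 (Real.sin t) - F (Real.sin t)^2 * hc
        rw [h1, Real.sqrt_sq (by positivity)]
      have hval : (1 / Real.sqrt (1 - (P (Real.sin t) / Q (Real.sin t)) ^ 2))
          * (((P' (Real.sin t) * Q (Real.sin t) - P (Real.sin t) * Q' (Real.sin t))
            / Q (Real.sin t) ^ 2) * Real.cos t) = S' t := by
        rw [hsqval, hI3 (Real.sin t), hS']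
        field_simp
      rw [← hval]
      exact hcomp
    have hS'cont : ContinuousOn S' (Set.uIcc (0:ℝ) T) := by
      apply Continuous.continuousOn
      exact (continuous_const.mul (hGc.comp Real.continuous_sin)).div
        (hQc.comp Real.continuous_sin) (fun t => (hQpos' t).ne')
    have hsub := integral_comp_smul_deriv (f := s) (f' := S')
      (g := fun u => 1 / Real.sqrt (1 - b^2 * Real.sin u ^ 2))
      (a := 0) (b := T) (by rw [huIcc]; exact hsderiv) hS'cont hfb
    have hs0 : s 0 = 0 := by simp [hs, hP0]
    rw [hs0] at hsub
    rw [← hsub]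
    rw [← intervalIntegral.integral_const_mul]
    apply intervalIntegral.integral_congr
    intro t ht
    rw [huIcc] at ht
    obtain ⟨hx01, hx1, hcos⟩ := hmem t ht
    have hQt := hQpos' t
    have hG := hGpos _ hx01
    have hy2 := hylt t ht
    have hy1 : |P (Real.sin t) / Q (Real.sin t)| < 1 := (sq_lt_one_iff_abs_lt_one _).1 hy2
    have hax : 0 < 1 - a^2 * Real.sin t ^ 2 := ha1 t
    have hsin_arcsin : Real.sin (s t) = P (Real.sin t) / Q (Real.sin t) := by
      apply Real.sin_arcsin <;> [linarith [abs_lt.1 hy1]; linarith [abs_lt.1 hy1]]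
    have h1 : 1 - b^2 * Real.sin (s t) ^ 2
        = (Real.sqrt (1 - a^2 * Real.sin t ^ 2) * G (Real.sin t) / Q (Real.sin t)) ^ 2 := by
      rw [hsin_arcsin]
      have hsq : Real.sqrt (1 - a^2 * Real.sin t ^ 2) ^ 2 = 1 - a^2 * Real.sin t ^ 2 :=
        Real.sq_sqrt hax.le
      field_simp
      linear_combination hI2 (Real.sin t) - G (Real.sin t)^2 * hsq
    show S' t • (1 / Real.sqrt (1 - b^2 * Real.sin (s t) ^ 2))
        = M * (1 / Real.sqrt (1 - a^2 * Real.sin t ^ 2))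
    rw [h1, Real.sqrt_sq (by positivity), smul_eq_mul, hS']
    have hsqrtpos : 0 < Real.sqrt (1 - a^2 * Real.sin t ^ 2) := Real.sqrt_pos.2 hax
    field_simp
  -- Step B : pass to the limit T → π/2
  have hPhi : Continuous (fun S => ∫ u in (0:ℝ)..S, 1 / Real.sqrt (1 - b^2 * Real.sin u ^ 2)) :=
    intervalIntegral.continuous_primitive (fun c d => hfb.intervalIntegrable c d) 0
  have hPsi : Continuous (fun T => ∫ t in (0:ℝ)..T, 1 / Real.sqrt (1 - a^2 * Real.sin t ^ 2)) :=
    intervalIntegral.continuous_primitive (fun c d => hfa.intervalIntegrable c d) 0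
  have hscont : Continuous s := Real.continuous_arcsin.comp
    ((hPc.comp Real.continuous_sin).div (hQc.comp Real.continuous_sin)
      (fun t => (hQpos' t).ne'))
  have hQ1 : Q 1 ≠ 0 := (hQpos 1 ⟨by norm_num, le_rfl⟩).ne'
  have hs_pi2 : s (π/2) = π/2 := by
    simp only [hs, Real.sin_pi_div_two, hP1, div_self hQ1, Real.arcsin_one]
  have h1 : Filter.Tendsto (fun T => ∫ u in (0:ℝ)..(s T), 1 / Real.sqrt (1 - b^2 * Real.sin u ^ 2))
      (nhdsWithin (π/2) (Set.Iio (π/2))) (nhds (K b)) := by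
    have h := ((hPhi.comp hscont).tendsto (π/2)).mono_left
      (nhdsWithin_le_nhds (s := Set.Iio (π/2)))
    simp only [Function.comp_def] at h
    rw [hs_pi2] at h
    exact h
  have h2 : Filter.Tendsto (fun T => M * ∫ t in (0:ℝ)..T, 1 / Real.sqrt (1 - a^2 * Real.sin t ^ 2))
      (nhdsWithin (π/2) (Set.Iio (π/2))) (nhds (M * K a)) :=
    ((continuous_const.mul hPsi).tendsto (π/2)).mono_left nhdsWithin_le_nhds
  have heq : (fun T => ∫ u in (0:ℝ)..(s T), 1 / Real.sqrt (1 - b^2 * Real.sin u ^ 2))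
      =ᶠ[nhdsWithin (π/2) (Set.Iio (π/2))]
      (fun T => M * ∫ t in (0:ℝ)..T, 1 / Real.sqrt (1 - a^2 * Real.sin t ^ 2)) := by
    apply Filter.eventuallyEq_of_mem (Ioo_mem_nhdsLT_of_mem
      (⟨Real.pi_div_two_pos, le_rfl⟩ : π/2 ∈ Set.Ioc (0:ℝ) (π/2)))
    intro T hT
    exact stepA T hT.1.le hT.2
  constructor
  · exact tendsto_nhds_unique (h1.congr' heq) h2
  · apply intervalIntegral.intervalIntegral_pos_of_pos (hfa.intervalIntegrable 0 (π/2))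
    · intro u; exact one_div_pos.2 (Real.sqrt_pos.2 (ha1 u))
    · exact Real.pi_div_two_pos


lemma polyP_deriv (c1 c3 c5 : ℝ) (x : ℝ) :
    HasDerivAt (fun y => c1*y + c3*y^3 + c5*y^5) (c1 + 3*c3*x^2 + 5*c5*x^4) x := by
  have h := (((hasDerivAt_id x).const_mul c1).add ((hasDerivAt_pow 3 x).const_mul c3)).add
    ((hasDerivAt_pow 5 x).const_mul c5)
  refine h.congr_deriv ?_
  push_cast; ring

lemma polyQ_deriv (c2 c4 : ℝ) (x : ℝ) :
    HasDerivAt (fun y => 1 + c2*y^2 + c4*y^4) (2*c2*x + 4*c4*x^3) x := by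
  have h := ((hasDerivAt_const x 1).add ((hasDerivAt_pow 2 x).const_mul c2)).add
    ((hasDerivAt_pow 4 x).const_mul c4)
  refine h.congr_deriv ?_
  push_cast; ring

theorem singular_modulus_one_fifth :
    Real.sqrt ((9 + 4 * Real.sqrt 5 + 2 * Real.sqrt (38 + 17 * Real.sqrt 5)) /
        (18 + 8 * Real.sqrt 5)) ∈ Set.Ioo (0:ℝ) 1 ∧
    K (Real.sqrt (1 - (Real.sqrt ((9 + 4 * Real.sqrt 5 + 2 * Real.sqrt (38 + 17 * Real.sqrt 5)) /
          (18 + 8 * Real.sqrt 5)))^2)) /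
      K (Real.sqrt ((9 + 4 * Real.sqrt 5 + 2 * Real.sqrt (38 + 17 * Real.sqrt 5)) /
          (18 + 8 * Real.sqrt 5))) = Real.sqrt (1/5) := by
  set A := Real.sqrt 5 with hA
  set B := Real.sqrt (38 + 17*A) with hB
  have hApos : 0 < A := Real.sqrt_pos.2 (by norm_num)
  have hA2 : A^2 = 5 := Real.sq_sqrt (by norm_num)
  have hAl : 2.23606 < A := (Real.lt_sqrt (by norm_num)).2 (by norm_num)
  have hAu : A < 2.23607 := by
    rw [hA, show (2.23607:ℝ) = Real.sqrt (2.23607^2) by rw [Real.sqrt_sq]; norm_num]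
    exact Real.sqrt_lt_sqrt (by norm_num) (by norm_num)
  have hB2 : B^2 = 38 + 17*A := Real.sq_sqrt (by positivity)
  have hBpos : 0 < B := Real.sqrt_pos.2 (by positivity)
  have hBl : 8.7185 < B := by
    rw [hB]; apply (Real.lt_sqrt (by norm_num)).2; nlinarith
  have hBu : B < 8.7186 := by
    rw [hB, show (8.7186:ℝ) = Real.sqrt (8.7186^2) by rw [Real.sqrt_sq]; norm_num]
    exact Real.sqrt_lt_sqrt (by positivity) (by nlinarith)
  have hABl : 19.494 < A*B := by nlinarith
  have hABu : A*B < 19.496 := by nlinarith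
  have hden : (0:ℝ) < 18 + 8*A := by linarith
  have hnum : (0:ℝ) < 9 + 4*A + 2*B := by linarith
  have hkpos : 0 < (9 + 4*A + 2*B)/(18 + 8*A) := div_pos hnum hden
  have hklt1 : (9 + 4*A + 2*B)/(18 + 8*A) < 1 := by
    rw [div_lt_one hden]; linarith
  have hkv : (9 + 4*A + 2*B)/(18 + 8*A) = 1/2 + (9 - 4*A)*B := by
    rw [div_eq_iff hden.ne']
    linear_combination 32*B*hA2
  -- scalar positivity facts
  have hq1 : (0:ℝ) < (((25-11*A)/2)*B) := by nlinarith
  have hq2 : (0:ℝ) < ((-5+3*A)/4 + ((29*A-65)/4)*B) := by nlinarith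
  have hf2 : (0:ℝ) < ((-1+3*A)/4 + ((15-7*A)/4)*B) := by nlinarith
  have hg2 : (0:ℝ) < ((3-A)/4 + ((29-13*A)/4)*B) := by nlinarith
  have h1f : (0:ℝ) < 1 + (-2 + ((25-11*A)/2)*B) := by nlinarith
  have hf1n : (-2 + ((25-11*A)/2)*B) < 0 := by nlinarith
  have h1g : (0:ℝ) < 1 + (-1 + ((13*A-29)/2)*B) := by nlinarith
  have hg1n : (-1 + ((13*A-29)/2)*B) < 0 := by nlinarith
  constructor
  · constructor
    · exact Real.sqrt_pos.2 hkpos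
    · rw [show (1:ℝ) = Real.sqrt 1 by simp]
      exact Real.sqrt_lt_sqrt hkpos.le hklt1
  set κ := (9 + 4*A + 2*B)/(18 + 8*A) with hκdef
  have hb2v : (Real.sqrt κ)^2 = κ := Real.sq_sqrt hkpos.le
  rw [hb2v]
  set b := Real.sqrt κ with hbdef
  set a := Real.sqrt (1 - κ) with hadef
  have hb2 : b^2 = 1/2 + (9 - 4*A)*B := by rw [hbdef, Real.sq_sqrt hkpos.le, hkv]
  have ha2 : a^2 = 1/2 - (9 - 4*A)*B := by
    rw [hadef, Real.sq_sqrt (by linarith : (0:ℝ) ≤ 1 - κ), hkv]; ring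
  have hblt : b^2 < 1 := by rw [hbdef, Real.sq_sqrt hkpos.le]; exact hklt1
  have halt : a^2 < 1 := by
    rw [hadef, Real.sq_sqrt (by linarith : (0:ℝ) ≤ 1 - κ)]; linarith
  have hkey : K b = A * K a ∧ 0 < K a := by
    apply key_subst a b A halt hblt hApos
      (fun x => A*x + (-A + ((7*A-15)/2)*B)*x^3 + ((-1+3*A)/4 + ((15-7*A)/4)*B)*x^5) (fun x => 1 + (((25-11*A)/2)*B)*x^2 + ((-5+3*A)/4 + ((29*A-65)/4)*B)*x^4) (fun x => A + 3*(-A + ((7*A-15)/2)*B)*x^2 + 5*((-1+3*A)/4 + ((15-7*A)/4)*B)*x^4) (fun x => 2*(((25-11*A)/2)*B)*x + 4*((-5+3*A)/4 + ((29*A-65)/4)*B)*x^3) (fun x => 1 + (-2 + ((25-11*A)/2)*B)*x^2 + ((-1+3*A)/4 + ((15-7*A)/4)*B)*x^4) (fun x => 1 + (-1 + ((13*A-29)/2)*B)*x^2 + ((3-A)/4 + ((29-13*A)/4)*B)*x^4)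
    · intro x; exact polyP_deriv _ _ _ x
    · intro x; exact polyQ_deriv _ _ x
    · exact (continuous_const.add ((continuous_const.mul (continuous_pow 2)))).add
        (continuous_const.mul (continuous_pow 4))
    · -- Q positive on [-1,1]
      intro x _
      nlinarith [mul_nonneg hq1.le (sq_nonneg x), mul_nonneg hq2.le (sq_nonneg (x*x))]
    · -- F positive on [0,1]
      intro x hx
      have hx2 : x^2 ≤ 1 := by nlinarith [hx.1, hx.2]
      nlinarith [mul_nonneg hf2.le (sq_nonneg (x*x)), sq_nonneg x,
        mul_nonneg (neg_nonneg.2 hf1n.le) (sub_nonneg.2 hx2)]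
    · -- G positive on [0,1]
      intro x hx
      have hx2 : x^2 ≤ 1 := by nlinarith [hx.1, hx.2]
      nlinarith [mul_nonneg hg2.le (sq_nonneg (x*x)), sq_nonneg x,
        mul_nonneg (neg_nonneg.2 hg1n.le) (sub_nonneg.2 hx2)]
    · -- identity I1
      intro x
      linear_combination ((-1)*x^2 + (2)*x^4 + (6079/2)*x^6 + (-6081/2)*x^8 + (-7)*B*x^4 + (21/2)*B*x^6 + (-7/2)*B*x^8 + (-1377)*A*x^6 + (1377)*A*x^8)*hA2 + ((-400)*x^6 + (400)*x^8 + (360)*A*x^6 + (-360)*A*x^8 + (-81)*A^2*x^6 + (81)*A^2*x^8)*hB2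
    · -- identity I2
      intro x
      rw [hb2, ha2]
      linear_combination ((-1/2)*x^2 + (-1572)*x^4 + (15517/4)*x^6 + (-12981/4)*x^8 + (1877/4)*x^10 + (-9)*B*x^2 + (29/2)*B*x^4 + (72911/4)*B*x^6 + (-72933/4)*B*x^8 + (4557)*B*x^10 + (-347)*A*x^4 + (-168)*A*x^6 + (1315/2)*A*x^8 + (-285/4)*A*x^10 + (4)*A*B*x^2 + (-8)*A*B*x^4 + (-32865/2)*A*B*x^6 + (32873/2)*A*B*x^8 + (-32865/8)*A*B*x^10 + (476)*A^2*x^4 + (-714)*A^2*x^6 + (374)*A^2*x^8 + (-68)*A^2*x^10 + (3706)*A^2*B*x^6 + (-3706)*A^2*B*x^8 + (1853/2)*A^2*B*x^10)*hA2 + ((207)*x^4 + (-1021/2)*x^6 + (427)*x^8 + (-247/4)*x^10 + (-4797/2)*B*x^6 + (4797/2)*B*x^8 + (-4797/8)*B*x^10 + (-47)*A*x^4 + (501/2)*A*x^6 + (-555/2)*A*x^8 + (37)*A*x^10 + (3235)*A*B*x^6 + (-3235)*A*B*x^8 + (3235/4)*A*B*x^10 + (-83)*A^2*x^4 + (84)*A^2*x^6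 + (-21/2)*A^2*x^8 + (19/4)*A^2*x^10 + (-2909/2)*A^2*B*x^6 + (2909/2)*A^2*B*x^8 + (-2909/8)*A^2*B*x^10 + (28)*A^3*x^4 + (-42)*A^3*x^6 + (22)*A^3*x^8 + (-4)*A^3*x^10 + (218)*A^3*B*x^6 + (-218)*A^3*B*x^8 + (109/2)*A^3*B*x^10)*hB2
    · -- identity I3
      intro x
      linear_combination ((2851/4)*x^4 + (-285/2)*x^6 + (7409/16)*x^8 + (9/2)*B*x^2 + (-15/4)*B*x^4 + (15/4)*B*x^6 + (1/8)*B*x^8 + (-6823/4)*A*x^4 + (1341/4)*A*x^6 + (-35/4)*A*x^8 + (-25/4)*A*B*x^6 + (2)*A*B*x^8 + (2431/4)*A^2*x^4 + (-221/2)*A^2*x^6 + (-1547/16)*A^2*x^8)*hA2 + ((-375/4)*x^4 + (75/4)*x^6 + (-975/16)*x^8 + (1065/4)*A*x^4 + (-105/2)*A*x^6 + (455/16)*A*x^8 + (-721/4)*A^2*x^4 + (137/4)*A^2*x^6 + (195/16)*A^2*x^8 + (143/4)*A^3*x^4 + (-13/2)*A^3*x^6 + (-91/16)*A^3*x^8)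*hB2
    · norm_num
    · ring
  obtain ⟨hKb, hKa⟩ := hkey
  rw [hKb]
  rw [show Real.sqrt (1/5) = A⁻¹ by rw [one_div, Real.sqrt_inv, ← hA]]
  field_simp
end
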